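/- Let g be the function defined on real numbers by g(x) = vol(conv(K ∪ (K' + x·t))), where K and K' are convex bodies in ℝⁿ and t is a fixed vector. Then g is a convex function. -/

import Mathlib

open MeasureTheory
open scoped RealInnerProductSpace ENNReal

/-- A nonempty compact convex subset of `ℝ` is a closed interval. -/
lemma compact_convex_eq_Icc {T : Set ℝ} (hT : IsCompact T) (hc : Convex ℝ T)
    (hne : T.Nonempty) : T = Set.Icc (sInf T) (sSup T) := by
  refine Set.Subset.antisymm
    (fun z hz => ⟨csInf_le hT.bddBelow hz, le_csSup hT.bddAbove hz⟩) ?_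
  exact hc.ordConnected.out (hT.sInf_mem hne) (hT.sSup_mem hne)

/-- The shear map `((u,h),s) ↦ (u, h + x s)`. -/
def shearMap (F : Type*) [AddCommGroup F] [Module ℝ F] (x : ℝ) :
    ((F × ℝ) × ℝ) →ₗ[ℝ] F × ℝ where
  toFun q := (q.1.1, q.1.2 + x * q.2)
  map_add' p q := by
    simp only [Prod.fst_add, Prod.snd_add, Prod.mk_add_mk, Prod.mk.injEq]
    refine ⟨trivial, by ring⟩
  map_smul' c q := by
    simp only [Prod.smul_fst, Prod.smul_snd, Prod.smul_mk, smul_eq_mul, RingHom.id_apply,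
      Prod.mk.injEq]
    refine ⟨trivial, by ring⟩

lemma shearMap_apply {F : Type*} [AddCommGroup F] [Module ℝ F] (x : ℝ) (q : (F × ℝ) × ℝ) :
    shearMap F x q = (q.1.1, q.1.2 + x * q.2) := rfl

section Core

variable {F : Type*} [NormedAddCommGroup F] [NormedSpace ℝ F] [FiniteDimensional ℝ F]
  [MeasurableSpace F] [BorelSpace F]

/-- Core inequality: the volume of a shear of a compact convex body is convex
in the shear parameter. -/
lemma core (μ : Measure F) [SigmaFinite μ]
    (D : Set ((F × ℝ) × ℝ)) (hDcpt : IsCompact D) (hDconv : Convex ℝ D)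
    {a b x y : ℝ} (ha : 0 ≤ a) (hb : 0 ≤ b) (hab : a + b = 1) :
    μ.prod volume (shearMap F (a*x+b*y) '' D)
      ≤ ENNReal.ofReal a * μ.prod volume (shearMap F x '' D)
      + ENNReal.ofReal b * μ.prod volume (shearMap F y '' D) := by
  have hcont : ∀ z : ℝ, Continuous (shearMap F z) := fun z =>
    (shearMap F z).continuous_of_finiteDimensional
  have hMcpt : ∀ z : ℝ, IsCompact (shearMap F z '' D) := fun z => hDcpt.image (hcont z)
  have hMmeas : ∀ z : ℝ, MeasurableSet (shearMap F z '' D) := fun z =>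
    (hMcpt z).isClosed.measurableSet
  set S : F → Set (ℝ × ℝ) := fun u => {q | ((u, q.1), q.2) ∈ D} with hS
  have hslice : ∀ (z : ℝ) (u : F), Prod.mk u ⁻¹' (shearMap F z '' D)
      = (fun q : ℝ × ℝ => q.1 + z * q.2) '' S u := by
    intro z u
    ext r
    constructor
    · rintro ⟨d, hd, hEq⟩
      rw [shearMap_apply, Prod.mk.injEq] at hEq
      refine ⟨(d.1.2, d.2), ?_, hEq.2⟩
      show ((u, d.1.2), d.2) ∈ D
      rw [← hEq.1]
      simpa using hd
    · rintro ⟨q, hq, rfl⟩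
      exact ⟨((u, q.1), q.2), hq, rfl⟩
  have hScpt : ∀ u : F, IsCompact (S u) := by
    intro u
    have hclosed : IsClosed (S u) := by
      have : S u = (fun q : ℝ × ℝ => ((u, q.1), q.2)) ⁻¹' D := rfl
      rw [this]
      exact hDcpt.isClosed.preimage (by fun_prop)
    have hbd : Bornology.IsBounded (S u) := by
      have hsub : S u ⊆ (fun d : (F × ℝ) × ℝ => (d.1.2, d.2)) '' D :=
        fun q hq => ⟨((u, q.1), q.2), hq, rfl⟩
      exact ((hDcpt.image (by fun_prop)).isBounded).subset hsub
    exact Metric.isCompact_of_isClosed_isBounded hclosed hbd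
  have hSconv : ∀ u : F, Convex ℝ (S u) := by
    intro u q1 h1 q2 h2 c d hc hd hcd
    show ((u, (c • q1 + d • q2).1), (c • q1 + d • q2).2) ∈ D
    have key : (((u, (c • q1 + d • q2).1), (c • q1 + d • q2).2) : (F × ℝ) × ℝ)
        = c • ((u, q1.1), q1.2) + d • ((u, q2.1), q2.2) := by
      simp only [Prod.fst_add, Prod.snd_add, Prod.smul_fst, Prod.smul_snd, Prod.smul_mk,
        Prod.mk_add_mk, smul_eq_mul, Prod.mk.injEq]
      refine ⟨⟨?_, trivial⟩, trivial⟩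
      rw [← add_smul, hcd, one_smul]
    rw [key]
    exact hDconv h1 h2 hc hd hcd
  have hpt : ∀ u : F, volume (Prod.mk u ⁻¹' (shearMap F (a*x+b*y) '' D))
      ≤ ENNReal.ofReal a * volume (Prod.mk u ⁻¹' (shearMap F x '' D))
        + ENNReal.ofReal b * volume (Prod.mk u ⁻¹' (shearMap F y '' D)) := by
    intro u
    rw [hslice, hslice, hslice]
    rcases Set.eq_empty_or_nonempty (S u) with hSe | hSne
    · simp [hSe]
    · set f : ℝ → ℝ × ℝ → ℝ := fun z q => q.1 + z * q.2 with hf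
      have hfc : ∀ z, Continuous (f z) := fun z =>
        continuous_fst.add (continuous_const.mul continuous_snd)
      have hTcpt : ∀ z, IsCompact (f z '' S u) := fun z => (hScpt u).image (hfc z)
      have hTconv : ∀ z, Convex ℝ (f z '' S u) := by
        intro z
        have hlin : f z = fun q => ((LinearMap.fst ℝ ℝ ℝ) + z • (LinearMap.snd ℝ ℝ ℝ)) q := by
          funext q; simp [hf, smul_eq_mul]
        rw [hlin]
        exact (hSconv u).linear_image _
      have hTne : ∀ z, (f z '' S u).Nonempty := fun z => hSne.image _
      have hIcc : ∀ z, f z '' S u = Set.Icc (sInf (f z '' S u)) (sSup (f z '' S u)) :=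
        fun z => compact_convex_eq_Icc (hTcpt z) (hTconv z) (hTne z)
      have hcombo : ∀ q : ℝ × ℝ, f (a*x+b*y) q = a * f x q + b * f y q := by
        intro q
        simp only [hf]
        linear_combination (-q.1) * hab
      have hsup : sSup (f (a*x+b*y) '' S u) ≤ a * sSup (f x '' S u) + b * sSup (f y '' S u) := by
        apply csSup_le (hTne _)
        rintro r ⟨q, hq, rfl⟩
        rw [hcombo q]
        exact add_le_add
          (mul_le_mul_of_nonneg_left (le_csSup (hTcpt x).bddAbove ⟨q, hq, rfl⟩) ha)
          (mul_le_mul_of_nonneg_left (le_csSup (hTcpt y).bddAbove ⟨q, hq, rfl⟩) hb)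
      have hinf : a * sInf (f x '' S u) + b * sInf (f y '' S u)
          ≤ sInf (f (a*x+b*y) '' S u) := by
        apply le_csInf (hTne _)
        rintro r ⟨q, hq, rfl⟩
        rw [hcombo q]
        exact add_le_add
          (mul_le_mul_of_nonneg_left (csInf_le (hTcpt x).bddBelow ⟨q, hq, rfl⟩) ha)
          (mul_le_mul_of_nonneg_left (csInf_le (hTcpt y).bddBelow ⟨q, hq, rfl⟩) hb)
      have hlen : ∀ z, 0 ≤ sSup (f z '' S u) - sInf (f z '' S u) := by
        intro z
        obtain ⟨r, hr⟩ := hTne z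
        have h1 := csInf_le (hTcpt z).bddBelow hr
        have h2 := le_csSup (hTcpt z).bddAbove hr
        linarith
      rw [hIcc (a*x+b*y), hIcc x, hIcc y, Real.volume_Icc, Real.volume_Icc, Real.volume_Icc,
        ← ENNReal.ofReal_mul ha, ← ENNReal.ofReal_mul hb,
        ← ENNReal.ofReal_add (mul_nonneg ha (hlen x)) (mul_nonneg hb (hlen y))]
      apply ENNReal.ofReal_le_ofReal
      nlinarith [hsup, hinf]
  rw [Measure.prod_apply (hMmeas (a*x+b*y)), Measure.prod_apply (hMmeas x),
    Measure.prod_apply (hMmeas y)]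
  calc ∫⁻ u, volume (Prod.mk u ⁻¹' (shearMap F (a*x+b*y) '' D)) ∂μ
      ≤ ∫⁻ u, (ENNReal.ofReal a * volume (Prod.mk u ⁻¹' (shearMap F x '' D))
          + ENNReal.ofReal b * volume (Prod.mk u ⁻¹' (shearMap F y '' D))) ∂μ :=
        lintegral_mono hpt
    _ = ENNReal.ofReal a * ∫⁻ u, volume (Prod.mk u ⁻¹' (shearMap F x '' D)) ∂μ
          + ENNReal.ofReal b * ∫⁻ u, volume (Prod.mk u ⁻¹' (shearMap F y '' D)) ∂μ := by
        rw [lintegral_add_left ((measurable_measure_prodMk_left (hMmeas x)).const_mul _),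
          lintegral_const_mul _ (measurable_measure_prodMk_left (hMmeas x)),
          lintegral_const_mul _ (measurable_measure_prodMk_left (hMmeas y))]

omit [MeasurableSpace F] [BorelSpace F] in
/-- Shearing the lifted body gives the closed convex hull of `C ∪ (C' + x•(0,1))`. -/
lemma shear_image_closedHull (C C' : Set (F × ℝ)) (hC : IsCompact C) (hC' : IsCompact C')
    (x : ℝ) :
    shearMap F x ''
        closure (convexHull ℝ ((fun p => (p, (0:ℝ))) '' C ∪ (fun p => (p, (1:ℝ))) '' C'))
      = closure (convexHull ℝ (C ∪ (fun p => p + x • ((0:F), (1:ℝ))) '' C')) := by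
  set U := (fun p => (p, (0:ℝ))) '' C ∪ (fun p => (p, (1:ℝ))) '' C' with hU
  have hUcpt : IsCompact U := (hC.image (by fun_prop)).union (hC'.image (by fun_prop))
  have hcont : Continuous (shearMap F x) := (shearMap F x).continuous_of_finiteDimensional
  have hDcpt : IsCompact (closure (convexHull ℝ U)) :=
    (isBounded_convexHull.mpr hUcpt.isBounded).isCompact_closure
  have himg : shearMap F x '' convexHull ℝ U
      = convexHull ℝ (C ∪ (fun p => p + x • ((0:F), (1:ℝ))) '' C') := by
    rw [LinearMap.image_convexHull]
    congr 1
    rw [hU, Set.image_union, ← Set.image_comp, ← Set.image_comp]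
    congr 1
    · have h0 : (shearMap F x) ∘ (fun p : F × ℝ => (p, (0:ℝ))) = id := by
        funext p
        simp [shearMap_apply]
      rw [h0, Set.image_id]
    · have h1 : (shearMap F x) ∘ (fun p : F × ℝ => (p, (1:ℝ)))
          = fun p => p + x • ((0:F), (1:ℝ)) := by
        funext p
        simp [shearMap_apply, Prod.ext_iff]
      rw [h1]
  apply Set.Subset.antisymm
  · calc shearMap F x '' closure (convexHull ℝ U)
        ⊆ closure (shearMap F x '' convexHull ℝ U) :=
          image_closure_subset_closure_image hcont
      _ = _ := by rw [himg]
  · apply closure_minimal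
    · rw [← himg]
      exact Set.image_mono subset_closure
    · exact (hDcpt.image hcont).isClosed

end Core


set_option maxHeartbeats 1000000 in
/-- For convex bodies `K`, `K'` in `ℝⁿ` and a fixed vector `t`, the function
`g(x) = vol(conv(K ∪ (K' + x • t)))` is convex. -/
theorem volume_convexHull_translate_convexOn {n : ℕ}
    (K K' : Set (EuclideanSpace ℝ (Fin n)))
    (hKcpt : IsCompact K) (hK'cpt : IsCompact K')
    (hKconv : Convex ℝ K) (hK'conv : Convex ℝ K')
    (hKint : (interior K).Nonempty) (hK'int : (interior K').Nonempty)
    (t : EuclideanSpace ℝ (Fin n)) :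
    ConvexOn ℝ Set.univ (fun x : ℝ =>
      (volume (convexHull ℝ (K ∪ (fun p => p + x • t) '' K'))).toReal) := by
  classical
  rcases eq_or_ne t 0 with rfl | ht
  · simp only [smul_zero, add_zero, Set.image_id']
    exact convexOn_const _ convex_univ
  set Fs := (ℝ ∙ t)ᗮ with hFs
  -- the linear equivalence `Fs × ℝ ≃ (EuclideanSpace ℝ (Fin n))`, `(u, r) ↦ u + r • t`
  set ψ : (Fs × ℝ) →ₗ[ℝ] (EuclideanSpace ℝ (Fin n)) := (Fs.subtype).coprod (LinearMap.toSpanSingleton ℝ (EuclideanSpace ℝ (Fin n)) t) with hψ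
  have hψ_apply : ∀ p : Fs × ℝ, ψ p = (p.1 : (EuclideanSpace ℝ (Fin n))) + p.2 • t := by
    intro p
    simp [hψ, LinearMap.toSpanSingleton_apply]
  have hψinj : Function.Injective ψ := by
    rw [← LinearMap.ker_eq_bot, LinearMap.ker_eq_bot']
    rintro ⟨u, r⟩ h
    rw [hψ_apply] at h
    have hu : ⟪t, (u : (EuclideanSpace ℝ (Fin n)))⟫ = 0 := by
      have := u.2
      rw [Submodule.mem_orthogonal] at this
      exact this t (Submodule.mem_span_singleton_self t)
    have h0 : ⟪t, (u : (EuclideanSpace ℝ (Fin n))) + r • t⟫ = 0 := by rw [h, inner_zero_right]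
    rw [inner_add_right, hu, zero_add, real_inner_smul_right] at h0
    have htt : ⟪t, t⟫ ≠ 0 := inner_self_ne_zero.mpr ht
    have hr : r = 0 := by
      rcases mul_eq_zero.mp h0 with h' | h'
      · exact h'
      · exact absurd h' htt
    subst hr
    have hu0 : (u : (EuclideanSpace ℝ (Fin n))) = 0 := by
      have := h
      rwa [zero_smul, add_zero] at this
    have : u = 0 := Subtype.ext hu0
    simp [this]
  have hrank : Module.finrank ℝ (Fs × ℝ) = Module.finrank ℝ (EuclideanSpace ℝ (Fin n)) := by
    rw [Module.finrank_prod, Module.finrank_self]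
    have h1 : Module.finrank ℝ (ℝ ∙ t) = 1 := finrank_span_singleton ht
    have h2 := Submodule.finrank_add_finrank_orthogonal (K := (ℝ ∙ t))
    rw [hFs]
    omega
  set Φ : (Fs × ℝ) ≃ₗ[ℝ] (EuclideanSpace ℝ (Fin n)) := LinearMap.linearEquivOfInjective ψ hψinj hrank with hΦ
  have hΦ_apply : ∀ p : Fs × ℝ, Φ p = (p.1 : (EuclideanSpace ℝ (Fin n))) + p.2 • t := by
    intro p
    rw [hΦ, LinearMap.linearEquivOfInjective_apply, hψ_apply]
  have hΦt : Φ (0, 1) = t := by rw [hΦ_apply]; simp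
  have hΦcont : Continuous Φ := Φ.toLinearMap.continuous_of_finiteDimensional
  have hΦscont : Continuous Φ.symm := Φ.symm.toLinearMap.continuous_of_finiteDimensional
  have hΦmeas : Measurable Φ := hΦcont.measurable
  set homeoΦ : (Fs × ℝ) ≃ₜ (EuclideanSpace ℝ (Fin n)) :=
    { toEquiv := Φ.toEquiv, continuous_toFun := hΦcont, continuous_invFun := hΦscont } with hhomeo
  -- Haar measure comparison
  haveI hHaarP : Measure.IsAddHaarMeasure (volume : Measure (Fs × ℝ)) := by
    rw [Measure.volume_eq_prod]
    exact Measure.prod.instIsAddHaarMeasure _ _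
  haveI hHaarν : (Measure.map (⇑Φ) (volume : Measure (Fs × ℝ))).IsAddHaarMeasure :=
    Measure.MapLinearEquiv.isAddHaarMeasure _ Φ
  obtain ⟨c, hcomp⟩ : ∃ c : ℝ≥0∞, ∀ S : Set (EuclideanSpace ℝ (Fin n)),
      MeasurableSet S → volume S = c * volume (Φ ⁻¹' S) := by
    refine ⟨((Measure.addHaarScalarFactor (volume : Measure (EuclideanSpace ℝ (Fin n)))
      (Measure.map (⇑Φ) volume)) : ℝ≥0∞), fun S hS => ?_⟩
    have h := Measure.isAddLeftInvariant_eq_smul (volume : Measure (EuclideanSpace ℝ (Fin n)))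
      (Measure.map (⇑Φ) volume)
    conv_lhs => rw [h]
    rw [Measure.smul_apply, Measure.map_apply hΦmeas hS, ENNReal.smul_def, smul_eq_mul]
  -- transported bodies
  set C : Set (Fs × ℝ) := Φ ⁻¹' K with hC
  set C' : Set (Fs × ℝ) := Φ ⁻¹' K' with hC'
  have hCcpt : IsCompact C := by
    have hCi : C = Φ.symm '' K := by
      ext p
      constructor
      · intro hp
        exact ⟨Φ p, hp, by simp⟩
      · rintro ⟨k, hk, rfl⟩
        show Φ (Φ.symm k) ∈ K
        simpa using hk
    rw [hCi]
    exact hKcpt.image hΦscont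
  have hC'cpt : IsCompact C' := by
    have hCi : C' = Φ.symm '' K' := by
      ext p
      constructor
      · intro hp
        exact ⟨Φ p, hp, by simp⟩
      · rintro ⟨k, hk, rfl⟩
        show Φ (Φ.symm k) ∈ K'
        simpa using hk
    rw [hCi]
    exact hK'cpt.image hΦscont
  set D : Set ((Fs × ℝ) × ℝ) :=
    closure (convexHull ℝ ((fun p => (p, (0:ℝ))) '' C ∪ (fun p => (p, (1:ℝ))) '' C')) with hD
  have hDcpt : IsCompact D := by
    rw [hD]
    exact (isBounded_convexHull.mpr
      (((hCcpt.image (by fun_prop)).union (hC'cpt.image (by fun_prop))).isBounded)).isCompact_closure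
  have hDconv : Convex ℝ D := by
    rw [hD]
    exact (convex_convexHull ℝ _).closure
  set A : ℝ → Set (EuclideanSpace ℝ (Fin n)) := fun x => convexHull ℝ (K ∪ (fun p => p + x • t) '' K') with hA
  have hAconv : ∀ x : ℝ, Convex ℝ (A x) := fun x => convex_convexHull ℝ _
  have hAbd : ∀ x : ℝ, Bornology.IsBounded (A x) := fun x =>
    isBounded_convexHull.mpr ((hKcpt.isBounded).union ((hK'cpt.image (by fun_prop)).isBounded))
  have hclcpt : ∀ x : ℝ, IsCompact (closure (A x)) := fun x => (hAbd x).isCompact_closure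
  have hvolA : ∀ x : ℝ, volume (A x) = volume (closure (A x)) := by
    intro x
    refine le_antisymm (measure_mono subset_closure) ?_
    calc volume (closure (A x)) ≤ volume (A x ∪ frontier (A x)) := by
          apply measure_mono
          intro z hz
          by_cases hzA : z ∈ A x
          · exact Or.inl hzA
          · exact Or.inr ⟨hz, fun h => hzA (interior_subset h)⟩
      _ ≤ volume (A x) + volume (frontier (A x)) := measure_union_le _ _
      _ = volume (A x) := by rw [(hAconv x).addHaar_frontier volume, add_zero]
  have himgHull : ∀ s : Set (Fs × ℝ), Φ '' convexHull ℝ s = convexHull ℝ (Φ '' s) :=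
    fun s => Φ.toLinearMap.image_convexHull s
  have hΦclosure : ∀ s : Set (Fs × ℝ), Φ '' closure s = closure (Φ '' s) :=
    fun s => homeoΦ.image_closure s
  have hDimg : ∀ x : ℝ, Φ '' (shearMap Fs x '' D) = closure (A x) := by
    intro x
    have h1 : Φ '' C = K := by rw [hC]; exact Set.image_preimage_eq K Φ.surjective
    have h2 : Φ '' ((fun p => p + x • ((0:Fs), (1:ℝ))) '' C')
        = (fun p => p + x • t) '' K' := by
      rw [← Set.image_comp]
      have hcomp2 : ⇑Φ ∘ (fun p => p + x • ((0:Fs), (1:ℝ))) = (fun p => p + x • t) ∘ ⇑Φ := by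
        funext p
        simp only [Function.comp_apply, map_add, _root_.map_smul, hΦt]
      rw [hcomp2, Set.image_comp, hC', Set.image_preimage_eq K' Φ.surjective]
    rw [hD, shear_image_closedHull C C' hCcpt hC'cpt x, hΦclosure, himgHull, Set.image_union,
      h1, h2]
  have hmain : ∀ x : ℝ, volume (A x) = c * volume (shearMap Fs x '' D) := by
    intro x
    rw [hvolA x, hcomp _ isClosed_closure.measurableSet, ← hDimg x,
      Set.preimage_image_eq _ Φ.injective]
  refine ⟨convex_univ, ?_⟩
  intro x _ y _ a b ha hb hab
  show (volume (A (a • x + b • y))).toReal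
      ≤ a • (volume (A x)).toReal + b • (volume (A y)).toReal
  simp only [smul_eq_mul]
  have hcore := core (volume : Measure Fs) D hDcpt hDconv (x := x) (y := y) ha hb hab
  rw [← Measure.volume_eq_prod] at hcore
  have hkey : volume (A (a*x+b*y))
      ≤ ENNReal.ofReal a * volume (A x) + ENNReal.ofReal b * volume (A y) := by
    rw [hmain, hmain, hmain]
    calc c * volume (shearMap Fs (a*x+b*y) '' D)
        ≤ c * (ENNReal.ofReal a * volume (shearMap Fs x '' D)
            + ENNReal.ofReal b * volume (shearMap Fs y '' D)) := mul_le_mul_right hcore c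
      _ = ENNReal.ofReal a * (c * volume (shearMap Fs x '' D))
            + ENNReal.ofReal b * (c * volume (shearMap Fs y '' D)) := by ring
  have hfin : ∀ z : ℝ, volume (A z) ≠ ⊤ := fun z =>
    ne_top_of_le_ne_top (hclcpt z).measure_lt_top.ne (measure_mono subset_closure)
  have hfx : ENNReal.ofReal a * volume (A x) ≠ ⊤ :=
    ENNReal.mul_ne_top ENNReal.ofReal_ne_top (hfin x)
  have hfy : ENNReal.ofReal b * volume (A y) ≠ ⊤ :=
    ENNReal.mul_ne_top ENNReal.ofReal_ne_top (hfin y)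
  calc (volume (A (a*x+b*y))).toReal
      ≤ (ENNReal.ofReal a * volume (A x) + ENNReal.ofReal b * volume (A y)).toReal :=
        ENNReal.toReal_mono (ENNReal.add_ne_top.mpr ⟨hfx, hfy⟩) hkey
    _ = a * (volume (A x)).toReal + b * (volume (A y)).toReal := by
        rw [ENNReal.toReal_add hfx hfy, ENNReal.toReal_mul, ENNReal.toReal_mul,
          ENNReal.toReal_ofReal ha, ENNReal.toReal_ofReal hb]
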